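/- Let $k$ be a field of characteristic $\neq 2$. Then for any $r \geq 1$, the twisted Pfister form $\langle\langle x_1, \ldots, x_r; -1 \rangle\rangle$ is anisotropic over $k(x_1, \ldots, x_r)$. -/

import Mathlib

/-- A diagonal quadratic form (given by its diagonal entries `d`) is anisotropic. -/
def Anisotropic {F : Type*} [Field F] {ι : Type*} [Fintype ι] (d : ι → F) : Prop :=
  ∀ w : ι → F, ∑ i, d i * w i ^ 2 = 0 → w = 0

open MvPolynomial

set_option maxHeartbeats 8000000

section Aux

variable {k : Type*} [Field k] {r : ℕ}

/-- The exponent finsupp of the squarefree monomial `∏_{i ∈ S} X i`, evaluated at `i`. -/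
lemma exp_apply (S : Finset (Fin r)) (i : Fin r) :
    (∑ j ∈ S, Finsupp.single j 1 : Fin r →₀ ℕ) i = if i ∈ S then 1 else 0 := by
  classical
  rw [Finset.sum_apply']
  simp [Finsupp.single_apply]

lemma prod_X_eq (S : Finset (Fin r)) :
    (∏ i ∈ S, (X i : MvPolynomial (Fin r) k)) =
      monomial (∑ j ∈ S, Finsupp.single j 1) 1 := by
  classical
  induction S using Finset.cons_induction with
  | empty => simp
  | cons a s ha ih =>
      rw [Finset.prod_cons, ih, Finset.sum_cons]
      rw [X, monomial_mul, one_mul]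

/-- The polynomial version of the anisotropy statement: a diagonal form whose entries are
nonzero scalars times the squarefree monomials `∏_{i ∈ S} X i` has no nontrivial zero with
polynomial coordinates. This is proved by a leading-monomial argument for the lexicographic
monomial order: the leading monomials of the summands lie in distinct parity classes of
exponent vectors, so no cancellation can occur. -/
lemma poly_anisotropic (c : Finset (Fin r) → k) (hc : ∀ S, c S ≠ 0)
    (w : Finset (Fin r) → MvPolynomial (Fin r) k)
    (h : ∑ S : Finset (Fin r), (MvPolynomial.C (c S) * ∏ i ∈ S, X i) * w S ^ 2 = 0) :
    ∀ S, w S = 0 := by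
  classical
  by_contra hw
  push_neg at hw
  obtain ⟨S₀, hS₀⟩ := hw
  set m := MonomialOrder.lex (σ := Fin r) with hm
  set e : Finset (Fin r) → (Fin r →₀ ℕ) := fun S => ∑ j ∈ S, Finsupp.single j 1 with he
  -- choose a leading monomial for each nonzero coordinate
  have hchoice : ∀ S : Finset (Fin r), ∃ μ : Fin r →₀ ℕ,
      w S ≠ 0 → μ ∈ (w S).support ∧ ∀ a ∈ (w S).support, m.toSyn a ≤ m.toSyn μ := by
    intro S
    by_cases hS : w S = 0
    · exact ⟨0, fun h' => absurd hS h'⟩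
    · obtain ⟨μ, h1, h2⟩ := Finset.exists_max_image (w S).support (fun a => m.toSyn a)
        (MvPolynomial.support_nonempty.mpr hS)
      exact ⟨μ, fun _ => ⟨h1, h2⟩⟩
  choose μ hμ using hchoice
  set ν : Finset (Fin r) → (Fin r →₀ ℕ) := fun S => e S + (μ S + μ S) with hν
  -- parity: ν determines S
  have parity : ∀ S S' : Finset (Fin r), ν S = ν S' → S = S' := by
    intro S S' hEq
    ext i
    have hi := DFunLike.congr_fun hEq i
    simp only [hν, Finsupp.add_apply, he, exp_apply] at hi
    by_cases h1 : i ∈ S <;> by_cases h2 : i ∈ S' <;>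
      simp only [h1, h2, if_true, if_false] at hi ⊢ <;> omega
  -- choose the maximal ν among nonzero coordinates
  set T : Finset (Finset (Fin r)) := Finset.univ.filter (fun S => w S ≠ 0) with hT
  have hTne : T.Nonempty := ⟨S₀, by simp [hT, hS₀]⟩
  obtain ⟨S₁, hS₁T, hS₁max⟩ := Finset.exists_max_image T (fun S => m.toSyn (ν S)) hTne
  have hwS₁ : w S₁ ≠ 0 := by simpa [hT] using hS₁T
  obtain ⟨hμmem, hμmax⟩ := hμ S₁ hwS₁
  -- rewrite each summand as monomial * (w*w)
  have hterm : ∀ S : Finset (Fin r),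
      (MvPolynomial.C (c S) * ∏ i ∈ S, X i) * w S ^ 2
        = monomial (e S) (c S) * (w S * w S) := by
    intro S
    rw [prod_X_eq, C_mul_monomial, mul_one, sq]
  -- support bound lemma
  have hbound : ∀ S : Finset (Fin r), w S ≠ 0 →
      ∀ a ∈ (monomial (e S) (c S) * (w S * w S)).support, m.toSyn a ≤ m.toSyn (ν S) := by
    intro S hS a ha
    have h1 := Finset.add_subset_add_left (MvPolynomial.support_mul (w S) (w S)) <|
      (MvPolynomial.support_mul (monomial (e S) (c S)) (w S * w S)) ha
    -- h1 : a ∈ (monomial (e S) (c S)).support + ((w S).support + (w S).support)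
    rw [Finset.mem_add] at h1
    obtain ⟨x, hx, yz, hyz, rfl⟩ := h1
    rw [Finset.mem_add] at hyz
    obtain ⟨y, hy, z, hz, rfl⟩ := hyz
    have hxe : x = e S := by
      have := support_monomial_subset hx
      simpa using this
    obtain ⟨-, hmax⟩ := hμ S hS
    have hy' := hmax y hy
    have hz' := hmax z hz
    subst hxe
    simp only [hν, map_add]
    exact add_le_add le_rfl (add_le_add hy' hz')
  -- the coefficient of ν S₁ in the sum
  have h0 : (0 : k) = ∑ S : Finset (Fin r),
      coeff (ν S₁) ((MvPolynomial.C (c S) * ∏ i ∈ S, X i) * w S ^ 2) := by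
    rw [← coeff_sum, h, coeff_zero]
  rw [Finset.sum_eq_single_of_mem S₁ (Finset.mem_univ S₁)] at h0
  · -- compute the S₁ coefficient
    rw [hterm] at h0
    have hsplit : ν S₁ = e S₁ + (μ S₁ + μ S₁) := rfl
    rw [hsplit, coeff_monomial_mul] at h0
    -- coefficient of (μ+μ) in w*w is (coeff μ w)^2
    have hkey : coeff (μ S₁ + μ S₁) (w S₁ * w S₁) = coeff (μ S₁) (w S₁) ^ 2 := by
      rw [coeff_mul]
      rw [Finset.sum_eq_single_of_mem ((μ S₁, μ S₁) : (Fin r →₀ ℕ) × (Fin r →₀ ℕ))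
        (Finset.HasAntidiagonal.mem_antidiagonal.mpr rfl)]
      · rw [sq]
      · rintro ⟨a, b⟩ hab hne
        rw [Finset.HasAntidiagonal.mem_antidiagonal] at hab
        by_contra hprod
        have ha : a ∈ (w S₁).support := by
          rw [mem_support_iff]; intro h'; apply hprod; simp [h']
        have hb : b ∈ (w S₁).support := by
          rw [mem_support_iff]; intro h'; apply hprod; simp [h']
        have ha' := hμmax a ha
        have hb' := hμmax b hb
        have hsum : m.toSyn a + m.toSyn b = m.toSyn (μ S₁) + m.toSyn (μ S₁) := by
          rw [← map_add, ← map_add, hab]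
        have haeq : m.toSyn a = m.toSyn (μ S₁) := by
          rcases lt_or_eq_of_le ha' with h' | h'
          · exact absurd hsum (by exact ne_of_lt (by exact add_lt_add_of_lt_of_le h' hb'))
          · exact h'
        have ha2 : a = μ S₁ := m.toSyn.injective haeq
        have hb2 : b = μ S₁ := by
          have := hab
          rw [ha2] at this
          exact add_left_cancel this
        exact hne (by rw [ha2, hb2])
    rw [hkey] at h0
    have hcoeff : coeff (μ S₁) (w S₁) ≠ 0 := mem_support_iff.mp hμmem
    exact (mul_ne_zero (hc S₁) (pow_ne_zero 2 hcoeff)) h0.symm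
  · -- other coefficients vanish
    intro S _ hSne
    by_cases hS : w S = 0
    · simp [hS]
    · have hST : S ∈ T := by simp [hT, hS]
      have hle := hS₁max S hST
      have hlt : m.toSyn (ν S) < m.toSyn (ν S₁) := by
        rcases lt_or_eq_of_le hle with h' | h'
        · exact h'
        · exact absurd (parity S S₁ (m.toSyn.injective h')) hSne
      rw [hterm]
      by_contra hne
      have hmem : ν S₁ ∈ (monomial (e S) (c S) * (w S * w S)).support :=
        mem_support_iff.mpr hne
      exact absurd (hbound S hS _ hmem) (not_le.mpr hlt)

end Aux

/-- for `k` of characteristic `≠ 2` and `r ≥ 1`, the twisted Pfister form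
`⟨⟨x₁, …, x_r; -1⟩⟩`, obtained from the Pfister form `⟨⟨x₁, …, x_r⟩⟩` (with diagonal
entries `∏_{i ∈ S} x_i`, `S ⊆ {1, …, r}`) by multiplying the last entry `x₁ ⋯ x_r`
by `-1`, is anisotropic over `k(x₁, …, x_r)`. -/
theorem twisted_pfister_form_minus_one_anisotropic
    {k : Type*} [Field k] (hk : (2 : k) ≠ 0) (r : ℕ) (hr : 1 ≤ r) :
    Anisotropic (fun S : Finset (Fin r) =>
      (∏ i ∈ S, algebraMap (MvPolynomial (Fin r) k)
          (FractionRing (MvPolynomial (Fin r) k)) (MvPolynomial.X i)) *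
        (if S = Finset.univ then -1 else 1)) := by
  classical
  intro w hw
  beta_reduce at hw
  set ε : Finset (Fin r) → k := fun S => if S = Finset.univ then -1 else 1 with hε
  have hεne : ∀ S, ε S ≠ 0 := by
    intro S
    simp only [hε]
    split_ifs
    · exact neg_ne_zero.mpr one_ne_zero
    · exact one_ne_zero
  obtain ⟨b, hb⟩ := IsLocalization.exist_integer_multiples_of_finite
    (nonZeroDivisors (MvPolynomial (Fin r) k)) w
  have hb' : ∀ S : Finset (Fin r), ∃ u : MvPolynomial (Fin r) k,
      algebraMap (MvPolynomial (Fin r) k) (FractionRing (MvPolynomial (Fin r) k)) u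
        = ((b : MvPolynomial (Fin r) k)) • w S := by
    intro S
    obtain ⟨u, hu⟩ := hb S
    exact ⟨u, hu⟩
  choose u hu using hb'
  have hinj : Function.Injective
      (algebraMap (MvPolynomial (Fin r) k) (FractionRing (MvPolynomial (Fin r) k))) :=
    IsFractionRing.injective _ _
  have hCε : ∀ S : Finset (Fin r),
      algebraMap (MvPolynomial (Fin r) k) (FractionRing (MvPolynomial (Fin r) k))
        (MvPolynomial.C (ε S)) = (if S = Finset.univ then (-1 : FractionRing (MvPolynomial (Fin r) k)) else 1) := by
    intro S
    simp only [hε]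
    split_ifs
    · rw [map_neg, map_neg, map_one, map_one]
    · rw [map_one, map_one]
  have hpoly : ∑ S : Finset (Fin r),
      (MvPolynomial.C (ε S) * ∏ i ∈ S, MvPolynomial.X i) * u S ^ 2 = 0 := by
    apply hinj
    rw [map_zero, map_sum]
    have key : ∀ S : Finset (Fin r),
        algebraMap (MvPolynomial (Fin r) k) (FractionRing (MvPolynomial (Fin r) k))
            ((MvPolynomial.C (ε S) * ∏ i ∈ S, MvPolynomial.X i) * u S ^ 2)
        = (algebraMap (MvPolynomial (Fin r) k) (FractionRing (MvPolynomial (Fin r) k))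
            (b : MvPolynomial (Fin r) k)) ^ 2 *
          (((∏ i ∈ S, algebraMap (MvPolynomial (Fin r) k)
              (FractionRing (MvPolynomial (Fin r) k)) (MvPolynomial.X i)) *
            (if S = Finset.univ then -1 else 1)) * w S ^ 2) := by
      intro S
      rw [map_mul, map_mul, map_pow, map_prod, hu S, Algebra.smul_def, hCε]
      ring
    rw [Finset.sum_congr rfl (fun S _ => key S), ← Finset.mul_sum, hw, mul_zero]
  have hu0 := poly_anisotropic ε hεne u hpoly
  have hbne : algebraMap (MvPolynomial (Fin r) k) (FractionRing (MvPolynomial (Fin r) k))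
      (b : MvPolynomial (Fin r) k) ≠ 0 := by
    intro h0
    have hb0 : (b : MvPolynomial (Fin r) k) = 0 := hinj (by rw [h0, map_zero])
    exact nonZeroDivisors.coe_ne_zero b hb0
  funext S
  have hS := hu S
  rw [hu0 S, map_zero, Algebra.smul_def] at hS
  have hwS : w S = 0 := by
    rcases mul_eq_zero.mp hS.symm with h' | h'
    · exact absurd h' hbne
    · exact h'
  show w S = 0
  exact hwS
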